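/- arXiv:1801.02278 — 2 statements merged into one kernel-verified Lean document; each statement's English description precedes it below -/
import Mathlib

section
/- The map Φ sending e_v to e_{(0)⌢v} extends to an isometric isomorphism from T_k(d,θ) onto its image in T_{k+1}(d,θ): for every finitely supported x, ‖Φ(x)‖_{T_{k+1}(d,θ)} = ‖x‖_{T_k(d,θ)}. -/
/-- Non-decreasing list of naturals. -/
abbrev NonDec (l : List ℕ) : Prop := l.Chain' (· ≤ ·)

/-- The order `≺` on nondecreasing sequences: the empty sequence is minimal;
nonempty sequences are compared by last entry, with lexicographic tie-breaking. -/
def prec (s t : List ℕ) : Prop :=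
  (s = [] ∧ t ≠ []) ∨
  (s ≠ [] ∧ t ≠ [] ∧ (s.getLast! < t.getLast! ∨
    (s.getLast! = t.getLast! ∧ List.Lex (· < ·) s t)))

/-- The map `X̂_v`: `(m_1,…,m_l) ↦ (f_1(m_1),…,f_l(m_l))` where
`f_j(0) = n_j` and `f_j(m) = n_k + m` for `m ≥ 1`, `v = (n_1,…,n_k)`. -/
def Xhat (v s : List ℕ) : List ℕ :=
  List.zipWith (fun a b => if b = 0 then a else v.getLast! + b) (v.take s.length) s

/-- The set `X_v^max`, described by its characterization:
`w ∈ X_v^max` iff `w` is nondecreasing of the same length as `v` and either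
`w_1 > n_k`, or there is `1 ≤ i ≤ k` with `(w_1,…,w_i) = (n_1,…,n_i)` and
(if `i < k`) `w_{i+1} > n_k`. -/
def XmaxSet (v : List ℕ) : Set (List ℕ) :=
  { w | w.length = v.length ∧ NonDec w ∧
    (v.getLast! < w.headI ∨
      ∃ i, 1 ≤ i ∧ i ≤ v.length ∧ w.take i = v.take i ∧
        (i < v.length → v.getLast! < w.getD i 0)) }

/-- An `E_k`-tree: a map on `ω^{≤k}` sending nondecreasing sequences of length `≤ k`
to nondecreasing sequences of the same length, preserving `≺` and initial segments. -/
def IsEkTree (k : ℕ) (X : List ℕ → List ℕ) : Prop :=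
  (∀ s, NonDec s → s.length ≤ k → NonDec (X s) ∧ (X s).length = s.length) ∧
  (∀ s t, NonDec s → NonDec t → s.length ≤ k → t.length ≤ k →
    (prec s t → prec (X s) (X t)) ∧ (s <+: t → X s <+: X t))

/-- `E ∈ AR^k`: `E` is a finite `≺`-initial segment of the restriction to `ω^{[k]}`
of some `E_k`-tree. -/
def memAR (k : ℕ) (E : Finset (List ℕ)) : Prop :=
  ∃ X : List ℕ → List ℕ, IsEkTree k X ∧
    (∀ e ∈ E, ∃ s, NonDec s ∧ s.length = k ∧ e = X s) ∧
    (∀ s, NonDec s → s.length = k → ∀ e ∈ E, prec (X s) e → X s ∈ E)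

/-- `ω^{[k]}`: nondecreasing sequences of naturals of length exactly `k`. -/
abbrev Vec (k : ℕ) := {l : List ℕ // NonDec l ∧ l.length = k}

/-- Restriction `Ex` of a finitely supported vector to a set of coordinates. -/
noncomputable def restrict {k : ℕ} (E : Finset (Vec k)) (x : Vec k →₀ ℝ) : Vec k →₀ ℝ :=
  x.filter (fun v => v ∈ E)

/-- `A < B`: every element of `A` is `≺`-below every element of `B`. -/
def Successive {k : ℕ} (A B : Finset (Vec k)) : Prop :=
  ∀ a ∈ A, ∀ b ∈ B, prec a.1 b.1

/-- Membership in `AR^k` for finite sets of elements of `ω^{[k]}`. -/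
def memARV (k : ℕ) (E : Finset (Vec k)) : Prop :=
  memAR k (E.image Subtype.val)

/-- A `d`-admissible sequence: at most `d` many `≺`-successive members of `AR^k`. -/
def Admissible (k d : ℕ) {m : ℕ} (E : Fin m → Finset (Vec k)) : Prop :=
  m ≤ d ∧ (∀ i, memARV k (E i)) ∧ ∀ i j, i < j → Successive (E i) (E j)

/-- The nondecreasing sequence of norms `|x|_j` defining the Tsirelson-type norm:
`|x|_0 = max |x_v|`, and `|x|_{j+1}` is the max of `|x|_j` and
`θ ∑ |E_i x|_j` over admissible sequences `(E_i)_{i=1}^m`, `1 ≤ m ≤ d`. -/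
noncomputable def normSeq (k d : ℕ) (θ : ℝ) : ℕ → (Vec k →₀ ℝ) → ℝ
  | 0, x => ⨆ v, |x v|
  | j + 1, x => max (normSeq k d θ j x)
      (sSup { r | ∃ m : ℕ, 1 ≤ m ∧ ∃ E : Fin m → Finset (Vec k),
        Admissible k d E ∧ r = θ * ∑ i, normSeq k d θ j (restrict (E i) x) })

/-- The norm of `T_k(d,θ)` on finitely supported vectors. -/
noncomputable def tnorm (k d : ℕ) (θ : ℝ) (x : Vec k →₀ ℝ) : ℝ :=
  ⨆ j, normSeq k d θ j x

/-- The map `Φ : ω^{[k]} → ω^{[k+1]}`, `v ↦ (0)⌢v`. -/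
def phi {k : ℕ} (v : Vec k) : Vec (k + 1) :=
  ⟨0 :: v.1, List.isChain_cons.mpr ⟨fun y _ => Nat.zero_le y, v.2.1⟩, by simp [v.2.2]⟩


namespace Work
open List

lemma last_cons (a : ℕ) (l : List ℕ) :
    (a :: l).getLast! = if l = [] then a else l.getLast! := by
  cases l with
  | nil => simp [List.getLast!_cons_eq_getLastD]
  | cons b m =>
    simp only [List.getLast!_cons_eq_getLastD, List.getLastD_cons, if_neg (by simp : (b :: m) ≠ [])]

lemma last_cons_ne (a : ℕ) {l : List ℕ} (h : l ≠ []) : (a :: l).getLast! = l.getLast! := by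
  rw [last_cons, if_neg h]

lemma last_singleton (a : ℕ) : ([a] : List ℕ).getLast! = a := by simp [last_cons]

lemma last_nil : ([] : List ℕ).getLast! = 0 := rfl

lemma last_map (f : ℕ → ℕ) {l : List ℕ} (h : l ≠ []) :
    (l.map f).getLast! = f l.getLast! := by
  induction l with
  | nil => simp at h
  | cons a m ih =>
    cases m with
    | nil => simp [last_singleton]
    | cons b m' =>
      rw [List.map_cons, last_cons_ne _ (by simp), last_cons_ne _ (by simp), ih (by simp)]

lemma last_replicate {n : ℕ} (h : 1 ≤ n) (c : ℕ) : (List.replicate n c).getLast! = c := by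
  induction n with
  | zero => omega
  | succ m ih =>
    rw [List.replicate_succ, last_cons]
    by_cases hm : m = 0
    · subst hm; simp
    · rw [if_neg (by simp [List.replicate_eq_nil_iff, hm])]
      exact ih (by omega)

lemma last_append_singleton (l : List ℕ) (c : ℕ) : (l ++ [c]).getLast! = c := by
  induction l with
  | nil => simp [last_singleton]
  | cons a m ih => rw [List.cons_append, last_cons_ne _ (by simp), ih]

lemma last_mem : ∀ {l : List ℕ}, l ≠ [] → l.getLast! ∈ l := by
  intro l
  induction l with
  | nil => intro h; exact absurd rfl h
  | cons a m ih =>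
    intro _
    cases m with
    | nil => simp [last_singleton]
    | cons b m' =>
      rw [last_cons_ne _ (by simp)]
      exact List.mem_cons_of_mem a (ih (by simp))

lemma nondec_cons_head_le {a : ℕ} {l : List ℕ} (h : NonDec (a :: l)) :
    a ≤ (a :: l).getLast! := by
  induction l generalizing a with
  | nil => simp [last_singleton]
  | cons b m ih =>
    rw [last_cons_ne _ (by simp)]
    have hab : a ≤ b := (List.isChain_cons_cons.1 h).1
    exact le_trans hab (ih (List.isChain_cons_cons.1 h).2)

lemma last_mem_le {l : List ℕ} (h : NonDec l) {x : ℕ} (hx : x ∈ l) : x ≤ l.getLast! := by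
  induction l with
  | nil => simp at hx
  | cons a m ih =>
    rcases List.mem_cons.1 hx with rfl | hx'
    · exact nondec_cons_head_le h
    · have hm : m ≠ [] := by rintro rfl; simp at hx'
      rw [last_cons_ne _ hm]
      exact ih (List.IsChain.tail h) hx'

lemma nondec_head_le_mem {a : ℕ} {l : List ℕ} (h : NonDec (a :: l)) {x : ℕ}
    (hx : x ∈ a :: l) : a ≤ x := by
  rcases List.mem_cons.1 hx with rfl | hx'
  · exact le_refl _
  · exact (List.pairwise_cons.1 (List.isChain_iff_pairwise.1 h)).1 x hx'

lemma nondec_tail {a : ℕ} {l : List ℕ} (h : NonDec (a :: l)) : NonDec l :=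
  (List.isChain_cons.1 h).2

lemma nondec_cons_of {a : ℕ} {l : List ℕ} (h : NonDec l) (ha : ∀ x ∈ l, a ≤ x) :
    NonDec (a :: l) :=
  List.isChain_cons.2 ⟨fun y hy => ha y (List.mem_of_mem_head? hy), h⟩

-- Lex helpers
lemma lex_nil_right (l : List ℕ) : ¬ List.Lex (· < ·) l [] := by
  intro h; cases h

lemma lex_cons_same_iff (a : ℕ) (l₁ l₂ : List ℕ) :
    List.Lex (· < ·) (a :: l₁) (a :: l₂) ↔ List.Lex (· < ·) l₁ l₂ := by
  constructor
  · intro h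
    cases h with
    | rel h => omega
    | cons h => exact h
  · exact List.Lex.cons

lemma lex_trans {s t u : List ℕ} (h1 : List.Lex (· < ·) s t) (h2 : List.Lex (· < ·) t u) :
    List.Lex (· < ·) s u := List.lex_trans (fun h1 h2 => lt_trans h1 h2) h1 h2

lemma lex_irrefl (s : List ℕ) : ¬ List.Lex (· < ·) s s := fun h => asymm_of (List.Lex (· < ·)) h h

lemma lex_total {s t : List ℕ} (h : s ≠ t) :
    List.Lex (· < ·) s t ∨ List.Lex (· < ·) t s := by
  have inst := (inferInstance : IsTrichotomous (List ℕ) (List.Lex (· < ·)))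
  rcases @trichotomous _ _ inst s t with h1 | h1 | h1
  · exact Or.inl h1
  · exact absurd h1 h
  · exact Or.inr h1

-- prec basics
lemma prec_right_ne {s t : List ℕ} (h : prec s t) : t ≠ [] := by
  rcases h with ⟨_, h⟩ | ⟨_, h, _⟩ <;> exact h

lemma prec_nil_iff {t : List ℕ} : prec [] t ↔ t ≠ [] := by
  constructor
  · exact prec_right_ne
  · intro h; exact Or.inl ⟨rfl, h⟩

lemma prec_nil_right {s : List ℕ} : ¬ prec s [] := by
  intro h; exact prec_right_ne h rfl

lemma prec_irrefl (s : List ℕ) : ¬ prec s s := by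
  rintro (⟨rfl, h⟩ | ⟨_, _, h | ⟨_, h⟩⟩)
  · exact h rfl
  · omega
  · exact lex_irrefl _ h

lemma prec_last_le {s t : List ℕ} (h : prec s t) : s.getLast! ≤ t.getLast! := by
  rcases h with ⟨rfl, _⟩ | ⟨_, _, h | ⟨h, _⟩⟩
  · rw [last_nil]; omega
  · omega
  · omega

lemma prec_trans {s t u : List ℕ} (h1 : prec s t) (h2 : prec t u) : prec s u := by
  have hu : u ≠ [] := prec_right_ne h2
  rcases h1 with ⟨rfl, ht⟩ | ⟨hs, ht, hc1⟩
  · exact Or.inl ⟨rfl, hu⟩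
  · rcases h2 with ⟨h, _⟩ | ⟨_, _, hc2⟩
    · exact absurd h ht
    · refine Or.inr ⟨hs, hu, ?_⟩
      rcases hc1 with h1 | ⟨e1, l1⟩
      · rcases hc2 with h2 | ⟨e2, _⟩
        · exact Or.inl (lt_trans h1 h2)
        · exact Or.inl (by omega)
      · rcases hc2 with h2 | ⟨e2, l2⟩
        · exact Or.inl (by omega)
        · exact Or.inr ⟨by omega, lex_trans l1 l2⟩

lemma prec_total {s t : List ℕ} (hs : s ≠ []) (ht : t ≠ []) (hne : s ≠ t) :
    prec s t ∨ prec t s := by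
  rcases lt_trichotomy s.getLast! t.getLast! with h | h | h
  · exact Or.inl (Or.inr ⟨hs, ht, Or.inl h⟩)
  · rcases lex_total hne with hl | hl
    · exact Or.inl (Or.inr ⟨hs, ht, Or.inr ⟨h, hl⟩⟩)
    · exact Or.inr (Or.inr ⟨ht, hs, Or.inr ⟨h.symm, hl⟩⟩)
  · exact Or.inr (Or.inr ⟨ht, hs, Or.inl h⟩)

lemma prec_cons_iff {h : ℕ} {s t : List ℕ} (hs : NonDec (h :: s)) (ht : NonDec (h :: t)) :
    prec (h :: s) (h :: t) ↔ prec s t := by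
  cases s with
  | nil =>
    cases t with
    | nil =>
      simp only [prec]
      constructor
      · rintro (⟨h1, _⟩ | ⟨_, _, h1 | ⟨_, h1⟩⟩)
        · simp at h1
        · omega
        · exact absurd h1 (lex_irrefl _)
      · rintro (⟨h1, h2⟩ | ⟨h1, _⟩) <;> simp_all
    | cons b t' =>
      constructor
      · intro _; exact Or.inl ⟨rfl, by simp⟩
      · intro _
        refine Or.inr ⟨by simp, by simp, ?_⟩
        rw [last_singleton, last_cons_ne _ (by simp : (b :: t') ≠ [])]
        have h1 : h ≤ (h :: b :: t').getLast! := nondec_cons_head_le ht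
        rw [last_cons_ne _ (by simp : (b :: t') ≠ [])] at h1
        rcases Nat.lt_or_ge h (b :: t').getLast! with h2 | h2
        · exact Or.inl h2
        · exact Or.inr ⟨by omega, List.Lex.cons List.Lex.nil⟩
  | cons a s' =>
    cases t with
    | nil =>
      constructor
      · rintro (⟨h1, _⟩ | ⟨_, _, h1 | ⟨e1, l1⟩⟩)
        · simp at h1
        · have h2 : h ≤ (h :: a :: s').getLast! := nondec_cons_head_le hs
          rw [last_cons_ne _ (by simp : (a :: s') ≠ [])] at h1 h2
          rw [last_singleton] at h1
          omega
        · rcases (lex_cons_same_iff _ _ _).1 l1 with h3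
          exact absurd h3 (lex_nil_right _)
      · intro h1; exact absurd h1 prec_nil_right
    | cons b t' =>
      have e1 : (h :: a :: s').getLast! = (a :: s').getLast! := last_cons_ne _ (by simp)
      have e2 : (h :: b :: t').getLast! = (b :: t').getLast! := last_cons_ne _ (by simp)
      constructor
      · rintro (⟨h1, _⟩ | ⟨_, _, h1 | ⟨he, hl⟩⟩)
        · simp at h1
        · exact Or.inr ⟨by simp, by simp, Or.inl (by omega)⟩
        · exact Or.inr ⟨by simp, by simp, Or.inr ⟨by omega, (lex_cons_same_iff _ _ _).1 hl⟩⟩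
      · rintro (⟨h1, _⟩ | ⟨_, _, h1 | ⟨he, hl⟩⟩)
        · simp at h1
        · exact Or.inr ⟨by simp, by simp, Or.inl (by omega)⟩
        · exact Or.inr ⟨by simp, by simp, Or.inr ⟨by omega, (lex_cons_same_iff _ _ _).2 hl⟩⟩

-- tree lemmas

lemma nondec_zero_cons {l : List ℕ} (h : NonDec l) : NonDec (0 :: l) :=
  List.isChain_cons.2 ⟨fun y _ => Nat.zero_le y, h⟩

lemma nondec_replicate (n c : ℕ) : NonDec (List.replicate n c) := by
  induction n with
  | zero => simp [NonDec, List.Chain']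
  | succ m ih =>
    rw [List.replicate_succ]
    exact List.isChain_cons.2 ⟨fun y hy => by
      cases m with
      | zero => simp at hy
      | succ m' => rw [List.replicate_succ] at hy; simp at hy; omega, ih⟩

lemma nondec_rep_append (n m : ℕ) : NonDec (List.replicate n 0 ++ [m]) := by
  induction n with
  | zero => simp [NonDec, List.Chain']
  | succ p ih => rw [List.replicate_succ, List.cons_append]; exact nondec_zero_cons ih

lemma nondec_take {l : List ℕ} (h : NonDec l) (j : ℕ) : NonDec (l.take j) :=
  h.take j

lemma replicate_ne_nil {n c : ℕ} (h : 1 ≤ n) : List.replicate n c ≠ [] := by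
  intro h0
  have := congrArg List.length h0
  simp at this; omega

-- LW1
lemma le_replicate {c : ℕ} : ∀ (s : List ℕ) (k : ℕ), (∀ x ∈ s, x ≤ c) → s.length ≤ k →
    List.Lex (· < ·) s (List.replicate k c) ∨ s = List.replicate k c := by
  intro s
  induction s with
  | nil =>
    intro k _ _
    cases k with
    | zero => exact Or.inr rfl
    | succ k' => rw [List.replicate_succ]; exact Or.inl List.Lex.nil
  | cons a s' ih =>
    intro k hle hlen
    cases k with
    | zero => simp at hlen
    | succ k' =>
      rw [List.replicate_succ]
      have ha : a ≤ c := hle a (by simp)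
      rcases Nat.lt_or_ge a c with h1 | h1
      · exact Or.inl (List.Lex.rel h1)
      · have hac : a = c := by omega
        subst hac
        rcases ih k' (fun x hx => hle x (by simp [hx])) (by simpa using hlen) with h2 | h2
        · exact Or.inl (List.Lex.cons h2)
        · exact Or.inr (by rw [h2])

-- LW2
lemma min_band {m : ℕ} (hm : 1 ≤ m) : ∀ (t : List ℕ) (n : ℕ), t ≠ [] → NonDec t →
    t.length ≤ n + 1 → t.getLast! = m →
    List.Lex (· < ·) (List.replicate n 0 ++ [m]) t ∨ List.replicate n 0 ++ [m] = t := by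
  intro t
  induction t with
  | nil => intro n h; exact absurd rfl h
  | cons y t'' ih =>
    intro n _ hnd hlen hlast
    cases t'' with
    | nil =>
      rw [last_singleton] at hlast
      subst hlast
      cases n with
      | zero => exact Or.inr (by simp)
      | succ n' =>
        rw [List.replicate_succ, List.cons_append]
        exact Or.inl (List.Lex.rel hm)
    | cons z t₃ =>
      have hn : 1 ≤ n := by simp at hlen; omega
      obtain ⟨n', rfl⟩ : ∃ n', n = n' + 1 := ⟨n - 1, by omega⟩
      rw [List.replicate_succ, List.cons_append]
      rcases Nat.eq_zero_or_pos y with rfl | hy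
      · have := ih n' (by simp) (nondec_tail hnd) (by simp at hlen ⊢; omega)
          (by rwa [last_cons_ne _ (by simp)] at hlast)
        rcases this with h1 | h1
        · exact Or.inl (List.Lex.cons h1)
        · exact Or.inr (by rw [h1])
      · exact Or.inl (List.Lex.rel hy)

-- LW4
lemma lex_take_contra : ∀ {P Q : List ℕ}, List.Lex (· < ·) P Q → P.length = Q.length →
    (∀ n, n + 1 ≤ P.length → (Q.take (n+1)).getLast! ≤ (P.take (n+1)).getLast!) → False := by
  intro P Q h
  induction h with
  | nil =>
    intro hlen _
    simp at hlen
  | @rel a l₁ b l₂ hab =>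
    intro _ hprop
    have := hprop 0 (by simp)
    simp only [List.take_succ_cons, List.take_zero] at this
    rw [last_singleton, last_singleton] at this
    omega
  | @cons a l₁ l₂ htail ih =>
    intro hlen hprop
    have hQ : l₂ ≠ [] := by intro h0; subst h0; cases htail
    have hP : l₁ ≠ [] := by
      intro h0; subst h0
      cases l₂ with
      | nil => exact hQ rfl
      | cons b m => simp at hlen
    apply ih (by simpa using hlen)
    intro m hm
    have hne2 : l₂.take (m+1) ≠ [] := by
      apply List.ne_nil_of_length_pos
      rw [List.length_take]
      have := List.length_pos_iff.2 hQ
      omega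
    have hne1 : l₁.take (m+1) ≠ [] := by
      apply List.ne_nil_of_length_pos
      rw [List.length_take]
      have := List.length_pos_iff.2 hP
      omega
    have := hprop (m + 1) (by simpa using Nat.succ_le_succ hm)
    simp only [List.take_succ_cons] at this
    rwa [last_cons_ne a hne2, last_cons_ne a hne1] at this

-- prefix-take for trees
lemma tree_take {k : ℕ} {X : List ℕ → List ℕ} (hX : IsEkTree k X) {p : List ℕ}
    (hp : NonDec p) (hlen : p.length ≤ k) (j : ℕ) (hj : j ≤ p.length) :
    X (p.take j) = (X p).take j := by
  have hpre : p.take j <+: p := List.take_prefix j p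
  have h1 := (hX.2 (p.take j) p (nondec_take hp j) hp
    (le_trans (by rw [List.length_take]; omega) hlen) hlen).2 hpre
  have h2 := List.prefix_iff_eq_take.1 h1
  have hlen1 : (X (p.take j)).length = j := by
    rw [(hX.1 (p.take j) (nondec_take hp j) (by rw [List.length_take]; omega)).2]
    rw [List.length_take]; omega
  rw [h2, hlen1]

-- LEMMA T
lemma lemmaT {k : ℕ} {X : List ℕ → List ℕ} (hX : IsEkTree k X) {s t : List ℕ}
    (hs : NonDec s) (ht : NonDec t) (hsne : s ≠ []) (htne : t ≠ [])
    (hsl : s.length ≤ k) (htl : t.length ≤ k)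
    (hlt : s.getLast! < t.getLast!) (h2 : 2 ≤ t.getLast!) :
    (X s).getLast! < (X t).getLast! := by
  have hk : 1 ≤ k := le_trans (by cases s with | nil => exact absurd rfl hsne | cons a l => simp) hsl
  set c := max s.getLast! 1 with hc
  have hc1 : 1 ≤ c := le_max_right _ _
  have hcs : s.getLast! ≤ c := le_max_left _ _
  have hct : c + 1 ≤ t.getLast! := by omega
  set w₁ := List.replicate k c with hw₁
  set w₂ := List.replicate (k-1) 0 ++ [c+1] with hw₂
  have hw₁nd : NonDec w₁ := nondec_replicate k c
  have hw₂nd : NonDec w₂ := nondec_rep_append _ _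
  have hw₁len : w₁.length = k := by simp [hw₁]
  have hw₂len : w₂.length = k := by simp [hw₂]; omega
  have hw₁ne : w₁ ≠ [] := replicate_ne_nil hk
  have hw₂ne : w₂ ≠ [] := by simp [hw₂]
  have hw₁last : w₁.getLast! = c := last_replicate hk c
  have hw₂last : w₂.getLast! = c + 1 := last_append_singleton _ _
  -- s ⪯ w₁
  have hs1 : prec s w₁ ∨ s = w₁ := by
    rcases Nat.lt_or_ge s.getLast! c with h1 | h1
    · exact Or.inl (Or.inr ⟨hsne, hw₁ne, Or.inl (by omega)⟩)
    · have hsc : s.getLast! = c := by omega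
      rcases le_replicate (c := c) s k (fun x hx => by
        have := last_mem_le hs hx; omega) hsl with h3 | h3
      · exact Or.inl (Or.inr ⟨hsne, hw₁ne, Or.inr ⟨by rw [hsc, hw₁last], h3⟩⟩)
      · exact Or.inr h3
  -- w₁ ≺ w₂
  have h12 : prec w₁ w₂ := Or.inr ⟨hw₁ne, hw₂ne, Or.inl (by omega)⟩
  -- w₂ ⪯ t
  have h2t : prec w₂ t ∨ w₂ = t := by
    rcases Nat.lt_or_ge (c+1) t.getLast! with h1 | h1
    · exact Or.inl (Or.inr ⟨hw₂ne, htne, Or.inl (by omega)⟩)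
    · have htc : t.getLast! = c + 1 := by omega
      have := min_band (by omega : 1 ≤ c + 1) t (k - 1) htne ht
        (show t.length ≤ (k-1)+1 by omega) htc
      rcases this with h3 | h3
      · exact Or.inl (Or.inr ⟨hw₂ne, htne, Or.inr ⟨by rw [hw₂last, htc], h3⟩⟩)
      · exact Or.inr h3
  -- chain of last inequalities
  have key : ∀ {p q : List ℕ}, NonDec p → NonDec q → p.length ≤ k → q.length ≤ k →
      prec p q → (X p).getLast! ≤ (X q).getLast! := by
    intro p q hp hq hpl hql hpq
    exact prec_last_le ((hX.2 p q hp hq hpl hql).1 hpq)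
  by_contra hcon
  push_neg at hcon
  have i1 : (X s).getLast! ≤ (X w₁).getLast! := by
    rcases hs1 with h | h
    · exact key hs hw₁nd hsl (le_of_eq hw₁len) h
    · rw [h]
  have i2 : (X w₁).getLast! ≤ (X w₂).getLast! :=
    key hw₁nd hw₂nd (le_of_eq hw₁len) (le_of_eq hw₂len) h12
  have i3 : (X w₂).getLast! ≤ (X t).getLast! := by
    rcases h2t with h | h
    · exact key hw₂nd ht (le_of_eq hw₂len) htl h
    · rw [h]
  have e12 : (X w₁).getLast! = (X w₂).getLast! := by omega
  have hprec12 : prec (X w₁) (X w₂) :=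
    (hX.2 w₁ w₂ hw₁nd hw₂nd (le_of_eq hw₁len) (le_of_eq hw₂len)).1 h12
  have hXw₁len : (X w₁).length = k := by
    rw [(hX.1 w₁ hw₁nd (le_of_eq hw₁len)).2, hw₁len]
  have hXw₂len : (X w₂).length = k := by
    rw [(hX.1 w₂ hw₂nd (le_of_eq hw₂len)).2, hw₂len]
  have hlex : List.Lex (· < ·) (X w₁) (X w₂) := by
    rcases hprec12 with ⟨h0, _⟩ | ⟨_, _, h0 | ⟨_, h0⟩⟩
    · exfalso; rw [h0] at hXw₁len; simp at hXw₁len; omega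
    · omega
    · exact h0
  apply lex_take_contra hlex (by rw [hXw₁len, hXw₂len])
  intro n hn
  rw [hXw₁len] at hn
  rw [← tree_take hX hw₁nd (le_of_eq hw₁len) (n+1) (by omega),
      ← tree_take hX hw₂nd (le_of_eq hw₂len) (n+1) (by omega)]
  rcases Nat.lt_or_ge (n+1) k with hnk | hnk
  · -- strict prefix: w₂.take = replicate (n+1) 0, w₁.take = replicate (n+1) c
    have e1 : w₁.take (n+1) = List.replicate (n+1) c := by
      rw [hw₁, List.take_replicate]; congr 1; omega
    have e2 : w₂.take (n+1) = List.replicate (n+1) 0 := by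
      rw [hw₂, List.take_append_of_le_length (by simp; omega), List.take_replicate]
      congr 1; omega
    rw [e1, e2]
    have hp : prec (List.replicate (n+1) 0) (List.replicate (n+1) c) := by
      refine Or.inr ⟨replicate_ne_nil (by omega), replicate_ne_nil (by omega), Or.inl ?_⟩
      rw [last_replicate (by omega), last_replicate (by omega)]; omega
    exact key (nondec_replicate _ _) (nondec_replicate _ _)
      (by simp; omega) (by simp; omega) hp
  · -- full lists
    have hnk' : n + 1 = k := by omega
    rw [hnk']
    rw [List.take_of_length_le (le_of_eq hw₁len), List.take_of_length_le (le_of_eq hw₂len)]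
    omega

-- listsLE
def listsLE : ℕ → ℕ → Finset (List ℕ)
  | 0, _ => {[]}
  | n+1, c => {[]} ∪ (Finset.range (c+1)).biUnion (fun a => (listsLE n c).image (fun l => a :: l))

lemma mem_listsLE : ∀ {n c : ℕ} {l : List ℕ}, l.length ≤ n → (∀ x ∈ l, x ≤ c) →
    l ∈ listsLE n c := by
  intro n
  induction n with
  | zero =>
    intro c l hlen _
    have hl : l.length = 0 := by omega
    rw [List.length_eq_zero_iff.1 hl]
    simp [listsLE]
  | succ m ih =>
    intro c l hlen hent
    cases l with
    | nil => simp [listsLE]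
    | cons a l' =>
      simp only [listsLE, Finset.mem_union, Finset.mem_biUnion, Finset.mem_range,
        Finset.mem_image]
      refine Or.inr ⟨a, by have := hent a (by simp); omega, l', ?_, rfl⟩
      exact ih (by simp at hlen; omega) (fun x hx => hent x (by simp [hx]))

lemma listsLE_spec : ∀ {n c : ℕ} {l : List ℕ}, l ∈ listsLE n c →
    l.length ≤ n ∧ ∀ x ∈ l, x ≤ c := by
  intro n
  induction n with
  | zero =>
    intro c l h
    simp [listsLE] at h
    subst h; simp
  | succ m ih =>
    intro c l h
    simp only [listsLE, Finset.mem_union, Finset.mem_biUnion, Finset.mem_range,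
      Finset.mem_image, Finset.mem_singleton] at h
    rcases h with rfl | ⟨a, ha, l', hl', rfl⟩
    · simp
    · obtain ⟨h1, h2⟩ := ih hl'
      constructor
      · simp; omega
      · intro x hx
        rcases List.mem_cons.1 hx with rfl | hx'
        · omega
        · exact h2 x hx'

section Push

variable (k : ℕ) (X : List ℕ → List ℕ)

open Classical in
noncomputable def Scal (c : ℕ) : ℕ :=
  ((listsLE k c).filter (fun s => s ≠ [] ∧ NonDec s)).sup (fun s => (X s).getLast!)

noncomputable def Lam (c : ℕ) : ℕ := max c (Scal k X c)

lemma Scal_ge {c : ℕ} {s : List ℕ} (hs : s ≠ []) (hnd : NonDec s) (hlen : s.length ≤ k)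
    (hlast : s.getLast! ≤ c) : (X s).getLast! ≤ Scal k X c := by
  unfold Scal
  refine Finset.le_sup (f := fun s => (X s).getLast!) ?_
  simp only [Finset.mem_filter]
  exact ⟨mem_listsLE hlen (fun x hx => le_trans (last_mem_le hnd hx) hlast), hs, hnd⟩

lemma Lam_ge_self (c : ℕ) : c ≤ Lam k X c := le_max_left _ _

lemma Lam_ge {c : ℕ} {s : List ℕ} (hs : s ≠ []) (hnd : NonDec s) (hlen : s.length ≤ k)
    (hlast : s.getLast! ≤ c) : (X s).getLast! ≤ Lam k X c :=
  le_trans (Scal_ge k X hs hnd hlen hlast) (le_max_right _ _)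

lemma Lam_mono : Monotone (Lam k X) := by
  classical
  intro c d hcd
  unfold Lam Scal
  apply max_le
  · omega
  · refine le_trans (Finset.sup_mono ?_) (le_max_right _ _)
    intro s hs
    simp only [Finset.mem_filter] at hs ⊢
    obtain ⟨h1, h2⟩ := hs
    exact ⟨mem_listsLE (listsLE_spec h1).1 (fun x hx => le_trans ((listsLE_spec h1).2 x hx) hcd), h2⟩

variable {k X}

/-- key: Λ c < (X t).getLast! whenever c < t.getLast!, 1 ≤ c -/
lemma Lam_lt (hX : IsEkTree k X) {c : ℕ} (hc : 1 ≤ c) {t : List ℕ}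
    (htne : t ≠ []) (htnd : NonDec t) (htl : t.length ≤ k) (hct : c < t.getLast!) :
    Lam k X c < (X t).getLast! := by
  classical
  have hk : 1 ≤ k := le_trans (by cases t with
    | nil => exact absurd rfl htne
    | cons a l => simp) htl
  have h2 : 2 ≤ t.getLast! := by omega
  -- c < (X t).getLast!
  have hsing : ∀ a : ℕ, X [a] = [(X [a]).getLast!] := by
    intro a
    have hlen1 : (X [a]).length = 1 := (hX.1 [a] (by simp [NonDec, List.Chain']) (by simp; omega)).2
    cases h : X [a] with
    | nil => rw [h] at hlen1; simp at hlen1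
    | cons x l =>
      rw [h] at hlen1
      simp at hlen1
      subst hlen1
      simp [last_singleton]
  have hf : StrictMono (fun a => (X [a]).getLast!) := by
    intro a b hab
    have hp : prec [a] [b] := Or.inr ⟨by simp, by simp, Or.inl (by
      rw [last_singleton, last_singleton]; omega)⟩
    have := (hX.2 [a] [b] (by simp [NonDec, List.Chain']) (by simp [NonDec, List.Chain']) (by simp; omega) (by simp; omega)).1 hp
    rcases this with ⟨h0, _⟩ | ⟨_, _, h0 | ⟨he, hl⟩⟩
    · rw [hsing a] at h0; simp at h0
    · exact h0
    · exfalso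
      rw [hsing a, hsing b] at hl
      rw [he] at hl
      exact lex_irrefl _ hl
  have hcle : c ≤ (X [c]).getLast! := hf.le_apply (x := c)
  have hct2 : (X [c]).getLast! < (X t).getLast! := by
    apply lemmaT hX (by simp [NonDec, List.Chain']) htnd (by simp) htne (by simp; omega) htl _ h2
    rw [last_singleton]; exact hct
  have hcXt : c < (X t).getLast! := by omega
  apply max_lt hcXt
  unfold Scal
  rw [Finset.sup_lt_iff (by
    show (0:ℕ) < (X t).getLast!
    omega)]
  intro s hsmem
  simp only [Finset.mem_filter] at hsmem
  obtain ⟨hmem, hsne, hsnd⟩ := hsmem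
  obtain ⟨hslen, hsent⟩ := listsLE_spec hmem
  apply lemmaT hX hsnd htnd hsne htne hslen htl _ h2
  have : s.getLast! ≤ c := by
    cases s with
    | nil => exact absurd rfl hsne
    | cons a l => exact hsent _ (last_mem (by simp))
  omega

lemma Lam_strict (hX : IsEkTree k X) {c d : ℕ} (hc : 1 ≤ c) (hcd : c < d) :
    Lam k X c < Lam k X d := by
  classical
  rcases Nat.eq_zero_or_pos k with rfl | hk
  · -- k = 0 : Scal is sup over empty set
    have h0 : ∀ e, Scal 0 X e = 0 := by
      intro e
      unfold Scal
      have hemp : ((listsLE 0 e).filter (fun s => s ≠ [] ∧ NonDec s)) = ∅ := by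
        rw [Finset.filter_eq_empty_iff]
        intro s hs
        rintro ⟨h2, _⟩
        exact h2 (List.length_eq_zero_iff.1 (by have := (listsLE_spec hs).1; omega))
      rw [hemp, Finset.sup_empty]
      rfl
    unfold Lam
    rw [h0, h0]
    omega
  · have h1 : Lam k X c < (X [d]).getLast! := by
      apply Lam_lt hX hc (by simp) (by simp [NonDec, List.Chain']) (by simp; omega)
      rw [last_singleton]; exact hcd
    exact lt_of_lt_of_le h1 (Lam_ge k X (by simp) (by simp [NonDec, List.Chain']) (by simp; omega)
      (by rw [last_singleton]))

end Push

lemma lex_map_strict {f : ℕ → ℕ} (hf : ∀ a b, 1 ≤ a → a < b → f a < f b) :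
    ∀ {s t : List ℕ}, List.Lex (· < ·) s t → (∀ x ∈ s, 1 ≤ x) →
      List.Lex (· < ·) (s.map f) (t.map f) := by
  intro s t h
  induction h with
  | nil => intro _; exact List.Lex.nil
  | @rel a l₁ b l₂ hab => intro hent; exact List.Lex.rel (hf a b (hent a (by simp)) hab)
  | @cons a l₁ l₂ h ih =>
    intro hent
    exact List.Lex.cons (ih (fun x hx => hent x (by simp [hx])))

section Push2

variable {k : ℕ} {X : List ℕ → List ℕ}

noncomputable def Xp (k : ℕ) (X : List ℕ → List ℕ) : List ℕ → List ℕ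
  | [] => []
  | a :: t => if a = 0 then 0 :: X t else (a :: t).map (Lam k X)

lemma Xp_nil : Xp k X [] = [] := rfl

lemma Xp_zero (t : List ℕ) : Xp k X (0 :: t) = 0 :: X t := by simp [Xp]

lemma Xp_pos {a : ℕ} (ha : a ≠ 0) (t : List ℕ) :
    Xp k X (a :: t) = (a :: t).map (Lam k X) := by simp [Xp, ha]

lemma X_nil_eq (hX : IsEkTree k X) : X [] = [] := by
  have := (hX.1 [] (by simp [NonDec, List.Chain']) (by simp)).2
  exact List.length_eq_zero_iff.1 (by simpa using this)

lemma isEkTree_Xp (hX : IsEkTree k X) : IsEkTree (k + 1) (Xp k X) := by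
  have hXlen : ∀ {u : List ℕ}, NonDec u → u.length ≤ k → (X u).length = u.length :=
    fun {u} h1 h2 => (hX.1 u h1 h2).2
  have hXnd : ∀ {u : List ℕ}, NonDec u → u.length ≤ k → NonDec (X u) :=
    fun {u} h1 h2 => (hX.1 u h1 h2).1
  constructor
  · intro s hs hlen
    cases s with
    | nil => exact ⟨by simp [NonDec, List.Chain', Xp_nil], by simp [Xp_nil]⟩
    | cons a t =>
      have htnd : NonDec t := nondec_tail hs
      have htlen : t.length ≤ k := by simp at hlen; omega
      by_cases ha : a = 0
      · subst ha
        rw [Xp_zero]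
        exact ⟨nondec_zero_cons (hXnd htnd htlen), by simp [hXlen htnd htlen]⟩
      · rw [Xp_pos ha]
        constructor
        · exact List.isChain_map_of_isChain (Lam k X) (fun x y hxy => Lam_mono k X hxy) hs
        · simp
  · intro s t hs ht hsl htl
    constructor
    · -- prec preservation
      intro hst
      cases s with
      | nil =>
        cases t with
        | nil => exact absurd rfl (prec_nil_iff.1 hst)
        | cons b t' =>
          rw [Xp_nil]
          refine prec_nil_iff.2 ?_
          apply List.ne_nil_of_length_pos
          by_cases hb : b = 0
          · subst hb; rw [Xp_zero]; simp
          · rw [Xp_pos hb]; simp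
      | cons a s' =>
        cases t with
        | nil => exact absurd hst prec_nil_right
        | cons b t' =>
          have hs'nd : NonDec s' := nondec_tail hs
          have ht'nd : NonDec t' := nondec_tail ht
          have hs'l : s'.length ≤ k := by simp at hsl; omega
          have ht'l : t'.length ≤ k := by simp at htl; omega
          by_cases ha : a = 0 <;> by_cases hb : b = 0
          · -- (0,0)
            subst ha; subst hb
            rw [Xp_zero, Xp_zero]
            refine (prec_cons_iff (nondec_zero_cons (hXnd hs'nd hs'l))
              (nondec_zero_cons (hXnd ht'nd ht'l))).2 ?_
            exact (hX.2 s' t' hs'nd ht'nd hs'l ht'l).1 ((prec_cons_iff hs ht).1 hst)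
          · -- (0, b≠0)
            subst ha
            rw [Xp_zero, Xp_pos hb]
            have hb1 : 1 ≤ b := Nat.pos_of_ne_zero hb
            have hble : b ≤ (b :: t').getLast! := nondec_cons_head_le ht
            have hle : (0 :: s').getLast! ≤ (b :: t').getLast! := prec_last_le hst
            have hrne : (b :: t').map (Lam k X) ≠ [] := by simp
            have hrlast : ((b :: t').map (Lam k X)).getLast! = Lam k X (b :: t').getLast! :=
              last_map _ (by simp)
            have hLamc : (b :: t').getLast! ≤ Lam k X (b :: t').getLast! := Lam_ge_self k X _
            by_cases hs'e : s' = []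
            · subst hs'e
              rw [X_nil_eq hX]
              refine Or.inr ⟨by simp, hrne, Or.inl ?_⟩
              rw [last_singleton, hrlast]
              omega
            · have hXs'ne : X s' ≠ [] := by
                apply List.ne_nil_of_length_pos
                rw [hXlen hs'nd hs'l]
                exact List.length_pos_iff.2 hs'e
              have hllast : (0 :: X s').getLast! = (X s').getLast! := last_cons_ne _ hXs'ne
              have hs'le : s'.getLast! ≤ (b :: t').getLast! := by
                rwa [last_cons_ne _ hs'e] at hle
              have hXle : (X s').getLast! ≤ Lam k X (b :: t').getLast! :=
                Lam_ge k X hs'e hs'nd hs'l hs'le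
              rcases lt_or_eq_of_le hXle with hlt | heq
              · exact Or.inr ⟨by simp, hrne, Or.inl (by omega)⟩
              · refine Or.inr ⟨by simp, hrne, Or.inr ⟨by rw [hllast, hrlast, heq], ?_⟩⟩
                rw [List.map_cons]
                refine List.Lex.rel ?_
                have := Lam_ge_self k X b
                omega
          · -- (a≠0, 0)
            subst hb
            rw [Xp_pos ha, Xp_zero]
            have ha1 : 1 ≤ a := Nat.pos_of_ne_zero ha
            have hale : a ≤ (a :: s').getLast! := nondec_cons_head_le hs
            rcases hst with ⟨h0, _⟩ | ⟨_, _, hlt | ⟨heq, hlex⟩⟩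
            · simp at h0
            · have ht'ne : t' ≠ [] := by
                intro h0; subst h0
                rw [last_singleton] at hlt
                omega
              rw [last_cons_ne _ ht'ne] at hlt
              have hkey := Lam_lt hX (by omega : 1 ≤ (a :: s').getLast!) ht'ne ht'nd ht'l hlt
              have hXt'ne : X t' ≠ [] := by
                apply List.ne_nil_of_length_pos
                rw [hXlen ht'nd ht'l]
                exact List.length_pos_iff.2 ht'ne
              refine Or.inr ⟨by simp, by simp, Or.inl ?_⟩
              rw [last_map _ (by simp : (a :: s') ≠ []), last_cons_ne _ hXt'ne]
              exact hkey
            · exfalso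
              cases hlex with
              | rel h => omega
              | cons h => exact ha rfl
          · -- (a≠0, b≠0)
            rw [Xp_pos ha, Xp_pos hb]
            have ha1 : 1 ≤ a := Nat.pos_of_ne_zero ha
            have hb1 : 1 ≤ b := Nat.pos_of_ne_zero hb
            have hale : a ≤ (a :: s').getLast! := nondec_cons_head_le hs
            have hent : ∀ x ∈ (a :: s'), 1 ≤ x :=
              fun x hx => le_trans ha1 (nondec_head_le_mem hs hx)
            have hlast1 : ((a :: s').map (Lam k X)).getLast! = Lam k X (a :: s').getLast! :=
              last_map _ (by simp)
            have hlast2 : ((b :: t').map (Lam k X)).getLast! = Lam k X (b :: t').getLast! :=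
              last_map _ (by simp)
            rcases hst with ⟨h0, _⟩ | ⟨_, _, hlt | ⟨heq, hlex⟩⟩
            · simp at h0
            · refine Or.inr ⟨by simp, by simp, Or.inl ?_⟩
              rw [hlast1, hlast2]
              exact Lam_strict hX (by omega) hlt
            · refine Or.inr ⟨by simp, by simp, Or.inr ⟨by rw [hlast1, hlast2, heq], ?_⟩⟩
              exact lex_map_strict (fun a b h1 h2 => Lam_strict hX h1 h2) hlex hent
    · -- prefix preservation
      intro hpre
      cases s with
      | nil => rw [Xp_nil]; exact List.nil_prefix
      | cons a s' =>
        cases t with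
        | nil =>
          exfalso
          have := hpre.length_le
          simp at this
        | cons b t' =>
          obtain ⟨rfl, htl'⟩ := List.cons_prefix_cons.1 hpre
          by_cases ha : a = 0
          · subst ha
            rw [Xp_zero, Xp_zero]
            exact List.cons_prefix_cons.2 ⟨rfl, (hX.2 s' t' (nondec_tail hs) (nondec_tail ht)
              (by simp at hsl; omega) (by simp at htl; omega)).2 htl'⟩
          · rw [Xp_pos ha, Xp_pos ha]
            exact List.IsPrefix.map _ hpre

end Push2

-- misc lemmas
lemma singleton_eq {l : List ℕ} (h : l.length = 1) : l = [l.getLast!] := by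
  cases l with
  | nil => simp at h
  | cons x m =>
    simp at h
    subst h
    simp [last_singleton]

lemma lex_pos_zero {x : ℕ} (hx : 1 ≤ x) {l m : List ℕ} :
    ¬ List.Lex (· < ·) (x :: l) (0 :: m) := by
  intro h
  cases h with
  | rel h => omega
  | cons h => omega

lemma last_zero_cons (l : List ℕ) : (0 :: l).getLast! = l.getLast! := by
  cases l with
  | nil => simp [last_singleton, last_nil]
  | cons a m => exact last_cons_ne _ (by simp)

lemma rep0_lex : ∀ (t : List ℕ), NonDec t →
    List.Lex (· < ·) (List.replicate t.length 0) t ∨ List.replicate t.length 0 = t := by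
  intro t
  induction t with
  | nil => exact fun _ => Or.inr rfl
  | cons y t' ih =>
    intro hnd
    simp only [List.length_cons, List.replicate_succ]
    rcases Nat.eq_zero_or_pos y with rfl | hy
    · rcases ih (nondec_tail hnd) with h | h
      · exact Or.inl (List.Lex.cons h)
      · exact Or.inr (by rw [h])
    · exact Or.inl (List.Lex.rel hy)

lemma prec_rep0 {t : List ℕ} (hnd : NonDec t) :
    prec (List.replicate t.length 0) t ∨ List.replicate t.length 0 = t := by
  cases t with
  | nil => exact Or.inr rfl
  | cons y t' =>
    rcases rep0_lex (y :: t') hnd with h | h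
    · refine Or.inl (Or.inr ⟨replicate_ne_nil (by simp), by simp, ?_⟩)
      rcases Nat.eq_zero_or_pos (y :: t').getLast! with h0 | h0
      · exact Or.inr ⟨by rw [last_replicate (by simp), h0], h⟩
      · refine Or.inl ?_
        rw [last_replicate (by simp)]
        omega
    · exact Or.inr h

section Pull

variable {k : ℕ} {X' : List ℕ → List ℕ}

noncomputable def Xq (X' : List ℕ → List ℕ) (t : List ℕ) : List ℕ := (X' (0 :: t)).tail

lemma Xq_decomp (hX' : IsEkTree (k+1) X') {t : List ℕ} (ht : NonDec t) (htl : t.length ≤ k) :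
    X' (0 :: t) = (X' [0]).getLast! :: Xq X' t := by
  have h1 : X' [0] <+: X' (0 :: t) :=
    (hX'.2 [0] (0 :: t) (by simp [NonDec, List.Chain']) (nondec_zero_cons ht) (by simp)
      (by simp; omega)).2 (by
        refine List.cons_prefix_cons.2 ⟨rfl, List.nil_prefix⟩)
  have h2 : X' [0] = [(X' [0]).getLast!] :=
    singleton_eq (hX'.1 [0] (by simp [NonDec, List.Chain']) (by simp)).2
  rw [h2] at h1
  cases h3 : X' (0 :: t) with
  | nil =>
    exfalso
    have := (hX'.1 (0 :: t) (nondec_zero_cons ht) (by simp; omega)).2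
    rw [h3] at this
    simp at this
  | cons x r =>
    rw [h3] at h1
    obtain ⟨rfl, -⟩ := List.cons_prefix_cons.1 h1
    rw [Xq, h3]
    simp

lemma isEkTree_Xq (hX' : IsEkTree (k+1) X') : IsEkTree k (Xq X') := by
  constructor
  · intro t ht htl
    obtain ⟨h1, h2⟩ := hX'.1 (0 :: t) (nondec_zero_cons ht) (by simp; omega)
    constructor
    · exact List.IsChain.tail h1
    · rw [Xq, List.length_tail, h2]; simp
  · intro s t hs ht hsl htl
    have hnds' : NonDec (X' (0 :: s)) :=
      (hX'.1 (0 :: s) (nondec_zero_cons hs) (by simp; omega)).1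
    have hndt' : NonDec (X' (0 :: t)) :=
      (hX'.1 (0 :: t) (nondec_zero_cons ht) (by simp; omega)).1
    have hds := Xq_decomp hX' hs hsl
    have hdt := Xq_decomp hX' ht htl
    constructor
    · intro hst
      have h1 : prec (0 :: s) (0 :: t) :=
        (prec_cons_iff (nondec_zero_cons hs) (nondec_zero_cons ht)).2 hst
      have h2 := (hX'.2 (0 :: s) (0 :: t) (nondec_zero_cons hs) (nondec_zero_cons ht)
        (by simp; omega) (by simp; omega)).1 h1
      rw [hds, hdt] at h2
      rw [hds] at hnds'
      rw [hdt] at hndt'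
      exact (prec_cons_iff hnds' hndt').1 h2
    · intro hst
      have h1 : (0 :: s) <+: (0 :: t) := List.cons_prefix_cons.2 ⟨rfl, hst⟩
      have h2 := (hX'.2 (0 :: s) (0 :: t) (nondec_zero_cons hs) (nondec_zero_cons ht)
        (by simp; omega) (by simp; omega)).2 h1
      rw [hds, hdt] at h2
      exact (List.cons_prefix_cons.1 h2).2

end Pull


-- general decomposition of a tree value at a cons
lemma cons_decomp {K : ℕ} {X' : List ℕ → List ℕ} (hX' : IsEkTree K X') {a : ℕ} {t : List ℕ}
    (ht : NonDec (a :: t)) (htl : (a :: t).length ≤ K) :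
    X' (a :: t) = (X' [a]).getLast! :: (X' (a :: t)).tail := by
  have hK : 1 ≤ K := le_trans (by simp) htl
  have h1 : X' [a] <+: X' (a :: t) :=
    (hX'.2 [a] (a :: t) (by simp [NonDec, List.Chain']) ht (by simpa using hK) htl).2
      (List.cons_prefix_cons.2 ⟨rfl, List.nil_prefix⟩)
  have h2 : X' [a] = [(X' [a]).getLast!] :=
    singleton_eq (hX'.1 [a] (by simp [NonDec, List.Chain']) (by simpa using hK)).2
  rw [h2] at h1
  cases h3 : X' (a :: t) with
  | nil =>
    exfalso
    have := (hX'.1 (a :: t) ht htl).2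
    rw [h3] at this
    simp at this
  | cons x r =>
    rw [h3] at h1
    obtain ⟨rfl, -⟩ := List.cons_prefix_cons.1 h1
    simp

lemma tree_singleton_strict {K : ℕ} {X' : List ℕ → List ℕ} (hX' : IsEkTree K X')
    (hK : 1 ≤ K) : StrictMono (fun a => (X' [a]).getLast!) := by
  intro a b hab
  have hsing : ∀ c : ℕ, X' [c] = [(X' [c]).getLast!] := by
    intro c
    exact singleton_eq (hX'.1 [c] (by simp [NonDec, List.Chain']) (by simpa using hK)).2
  have hp : prec [a] [b] := Or.inr ⟨by simp, by simp, Or.inl (by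
    rw [last_singleton, last_singleton]; omega)⟩
  have := (hX'.2 [a] [b] (by simp [NonDec, List.Chain']) (by simp [NonDec, List.Chain']) (by simpa using hK)
    (by simpa using hK)).1 hp
  rcases this with ⟨h0, _⟩ | ⟨_, _, h0 | ⟨he, hl⟩⟩
  · rw [hsing a] at h0; simp at h0
  · exact h0
  · exfalso
    rw [hsing a, hsing b] at hl
    rw [he] at hl
    exact lex_irrefl _ hl

-- Vec-level basics
lemma phi_inj {k : ℕ} : Function.Injective (phi (k := k)) := by
  intro a b h
  have := congrArg Subtype.val h
  simp only [phi, List.cons.injEq] at this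
  exact Subtype.ext this.2

instance vecNonempty {k : ℕ} : Nonempty (Vec k) :=
  ⟨⟨List.replicate k 0, nondec_replicate k 0, by simp⟩⟩

lemma phi_val {k : ℕ} (v : Vec k) : (phi v).1 = 0 :: v.1 := rfl

lemma prec_phi_iff {k : ℕ} (v w : Vec k) : prec (phi v).1 (phi w).1 ↔ prec v.1 w.1 := by
  rw [phi_val, phi_val]
  exact prec_cons_iff (nondec_zero_cons v.2.1) (nondec_zero_cons w.2.1)

lemma exists_max {k : ℕ} (A : Finset (Vec k)) (h : A.Nonempty) :
    ∃ a ∈ A, ∀ b ∈ A, b = a ∨ prec b.1 a.1 := by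
  classical
  induction A using Finset.induction_on with
  | empty => exact absurd h (by simp)
  | @insert x A' hx ih =>
    rcases A'.eq_empty_or_nonempty with rfl | hA'
    · exact ⟨x, by simp, by intro b hb; simp at hb; exact Or.inl hb⟩
    · obtain ⟨a, haA, hamax⟩ := ih hA'
      by_cases hxa : x = a ∨ prec x.1 a.1
      · refine ⟨a, by simp [haA], ?_⟩
        intro b hb
        rcases Finset.mem_insert.1 hb with rfl | hb'
        · exact hxa
        · exact hamax b hb'
      · push_neg at hxa
        obtain ⟨hne, hnp⟩ := hxa
        have hvalne : x.1 ≠ a.1 := fun hv => hne (Subtype.ext hv)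
        have hxne : x.1 ≠ [] := by
          intro h0
          apply hvalne
          have hk0 : k = 0 := by have := x.2.2; rw [h0] at this; simpa using this.symm
          have ha0 : a.1 = [] := List.length_eq_zero_iff.1 (by rw [a.2.2, hk0])
          rw [h0, ha0]
        have hane : a.1 ≠ [] := by
          intro h0
          apply hvalne
          have hk0 : k = 0 := by have := a.2.2; rw [h0] at this; simpa using this.symm
          have hb0 : x.1 = [] := List.length_eq_zero_iff.1 (by rw [x.2.2, hk0])
          rw [h0, hb0]
        rcases prec_total hxne hane hvalne with hp | hp
        · exact absurd hp hnp
        · refine ⟨x, by simp, ?_⟩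
          intro b hb
          rcases Finset.mem_insert.1 hb with rfl | hb'
          · exact Or.inl rfl
          · rcases hamax b hb' with rfl | hbp
            · exact Or.inr hp
            · exact Or.inr (prec_trans hbp hp)

-- pullback of a set along phi
noncomputable def pullF {k : ℕ} (E' : Finset (Vec (k+1))) : Finset (Vec k) :=
  E'.preimage phi (by intro a _ b _ h; exact phi_inj h)

lemma mem_pullF {k : ℕ} {E' : Finset (Vec (k+1))} {v : Vec k} :
    v ∈ pullF E' ↔ phi v ∈ E' := Finset.mem_preimage

lemma memARV_pull {k : ℕ} {E' : Finset (Vec (k+1))} (h : memARV (k+1) E') :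
    memARV k (pullF E') := by
  obtain ⟨X', hX', hcov, hclos⟩ := h
  have hmem : ∀ l : List ℕ, (l ∈ (pullF E').image Subtype.val ↔
      (NonDec l ∧ l.length = k ∧ (0 :: l) ∈ E'.image Subtype.val)) := by
    intro l
    constructor
    · rintro hl
      obtain ⟨v, hv, rfl⟩ := Finset.mem_image.1 hl
      exact ⟨v.2.1, v.2.2, Finset.mem_image.2 ⟨phi v, mem_pullF.1 hv, rfl⟩⟩
    · rintro ⟨h1, h2, h3⟩
      obtain ⟨w, hw, hweq⟩ := Finset.mem_image.1 h3
      refine Finset.mem_image.2 ⟨⟨l, h1, h2⟩, mem_pullF.2 ?_, rfl⟩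
      have : w = phi ⟨l, h1, h2⟩ := Subtype.ext hweq
      rwa [this] at hw
  have hXq := isEkTree_Xq hX'
  -- the head function
  have hf0 : ∀ {e : List ℕ}, (0 :: e) ∈ E'.image Subtype.val →
      (X' [0]).getLast! = 0 ∧ ∃ t, NonDec t ∧ t.length = k ∧ e = Xq X' t := by
    intro e h0e
    obtain ⟨u, hund, hulen, hequ⟩ := hcov (0 :: e) h0e
    cases u with
    | nil => simp at hulen
    | cons a t =>
      have hdec := cons_decomp hX' hund (by rw [hulen])
      rw [hdec] at hequ
      have hheads : 0 = (X' [a]).getLast! := (List.cons_eq_cons.1 hequ).1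
      have ha0 : a = 0 := by
        by_contra hane
        have := tree_singleton_strict hX' (by omega) (show 0 < a by omega)
        simp only at this
        omega
      subst ha0
      refine ⟨hheads.symm, t, nondec_tail hund, by simpa using hulen, ?_⟩
      have := (List.cons_eq_cons.1 hequ).2
      rw [this, Xq]
  refine ⟨Xq X', hXq, ?_, ?_⟩
  · intro e he
    obtain ⟨h1, h2, h3⟩ := (hmem e).1 he
    obtain ⟨-, t, ht1, ht2, ht3⟩ := hf0 h3
    exact ⟨t, ht1, ht2, ht3⟩
  · intro s hs hslen e he hprec
    obtain ⟨h1, h2, h3⟩ := (hmem e).1 he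
    obtain ⟨hf00, -⟩ := hf0 h3
    have hXqs := hXq.1 s hs (le_of_eq hslen)
    have hdec : X' (0 :: s) = 0 :: Xq X' s := by
      have := cons_decomp hX' (nondec_zero_cons hs) (by simp; omega)
      rw [hf00] at this
      exact this
    have hlift : prec (0 :: Xq X' s) (0 :: e) :=
      (prec_cons_iff (nondec_zero_cons hXqs.1) (nondec_zero_cons h1)).2 hprec
    have := hclos (0 :: s) (nondec_zero_cons hs) (by simp [hslen]) (0 :: e) h3
      (by rw [hdec]; exact hlift)
    rw [hdec] at this
    exact (hmem _).2 ⟨hXqs.1, by rw [hXqs.2, hslen], this⟩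


lemma mem_image_val {k : ℕ} {A : Finset (Vec k)} {v : Vec k} :
    v.1 ∈ A.image Subtype.val ↔ v ∈ A := by
  constructor
  · intro h
    obtain ⟨w, hw, hwe⟩ := Finset.mem_image.1 h
    rwa [Subtype.ext hwe] at hw
  · intro h; exact Finset.mem_image_of_mem _ h

lemma push_exists {k : ℕ} {E : Finset (Vec k)} (hE : memARV k E) {a : Vec k} (haE : a ∈ E) :
    ∃ E' : Finset (Vec (k+1)), memARV (k+1) E' ∧
      (∀ v : Vec k, phi v ∈ E' ↔ (v ∈ E ∧ (prec v.1 a.1 ∨ v = a))) ∧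
      (∀ w ∈ E', (∃ v ∈ E, w = phi v) ∨ (1 ≤ w.1.headI ∧ w.1.getLast! < a.1.getLast!)) ∧
      (∃ e₀ ∈ E, ∀ w ∈ E', e₀.1.getLast! ≤ w.1.getLast!) := by
  classical
  obtain ⟨X, hX, hcov, hclos⟩ := hE
  set N := a.1.getLast! with hN
  set cond : List ℕ → Prop := fun l => l.length = k+1 ∧ NonDec l ∧
    (∃ u, NonDec u ∧ u.length = k+1 ∧ l = Xp k X u) ∧
    (prec l (0 :: a.1) ∨ l = 0 :: a.1) with hcond
  set E'list : Finset (List ℕ) := (listsLE (k+1) N).filter cond with hE'list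
  set E' : Finset (Vec (k+1)) := Finset.subtype _ E'list with hE'
  have hmemE' : ∀ l : List ℕ, l ∈ E'list ↔ cond l := by
    intro l
    constructor
    · intro h; exact (Finset.mem_filter.1 h).2
    · intro h
      refine Finset.mem_filter.2 ⟨?_, h⟩
      obtain ⟨h1, h2, h3, h4⟩ := h
      have hlast : l.getLast! ≤ N := by
        rcases h4 with h4 | h4
        · have := prec_last_le h4
          rwa [last_zero_cons] at this
        · rw [h4, last_zero_cons]
      exact mem_listsLE (by omega) (fun x hx => le_trans (last_mem_le h2 hx) hlast)
  have hmemE'v : ∀ w : Vec (k+1), w ∈ E' ↔ w.1 ∈ E'list := fun w => Finset.mem_subtype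
  -- upward membership
  have hup : ∀ v : Vec k, v ∈ E → (prec v.1 a.1 ∨ v = a) → (0 :: v.1) ∈ E'list := by
    intro v hv hva
    obtain ⟨t, ht1, ht2, ht3⟩ := hcov v.1 (mem_image_val.2 hv)
    refine (hmemE' _).2 ⟨by simp [v.2.2], nondec_zero_cons v.2.1,
      ⟨0 :: t, nondec_zero_cons ht1, by simp [ht2], by rw [Xp_zero, ht3]⟩, ?_⟩
    rcases hva with hva | rfl
    · exact Or.inl ((prec_cons_iff (nondec_zero_cons v.2.1) (nondec_zero_cons a.2.1)).2 hva)
    · exact Or.inr rfl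
  -- downward membership
  have hdown : ∀ l, l ∈ E'list →
      (∃ v : Vec k, v ∈ E ∧ (prec v.1 a.1 ∨ v = a) ∧ l = 0 :: v.1) ∨
      (1 ≤ l.headI ∧ l.getLast! < N ∧ (X (List.replicate k 0)).getLast! ≤ l.getLast!) := by
    intro l hl
    obtain ⟨hlen, hnd, ⟨u, hund, hulen, hequ⟩, hprecc⟩ := (hmemE' _).1 hl
    cases u with
    | nil => simp at hulen
    | cons b t =>
      have htnd : NonDec t := nondec_tail hund
      have htlen : t.length = k := by simpa using hulen
      by_cases hb : b = 0
      · subst hb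
        rw [Xp_zero] at hequ
        left
        have hXt := hX.1 t htnd (le_of_eq htlen)
        have hdisj : prec (X t) a.1 ∨ X t = a.1 := by
          rcases hprecc with h4 | h4
          · rw [hequ] at h4
            exact Or.inl ((prec_cons_iff (nondec_zero_cons hXt.1)
              (nondec_zero_cons a.2.1)).1 h4)
          · rw [hequ] at h4
            exact Or.inr (List.cons_eq_cons.1 h4).2
        rcases hdisj with hdisj1 | hdisj1
        · have hmem := hclos t htnd htlen a.1 (mem_image_val.2 haE) hdisj1
          obtain ⟨v, hvE, hveq⟩ := Finset.mem_image.1 hmem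
          exact ⟨v, hvE, Or.inl (by rw [hveq]; exact hdisj1), by rw [hequ, hveq]⟩
        · exact ⟨a, haE, Or.inr rfl, by rw [hequ, hdisj1]⟩
      · rw [Xp_pos hb] at hequ
        right
        have hb1 : 1 ≤ b := Nat.pos_of_ne_zero hb
        have hbl : b ≤ (b :: t).getLast! := nondec_cons_head_le hund
        have hhead : l.headI = Lam k X b := by rw [hequ]; simp
        have hlast : l.getLast! = Lam k X (b :: t).getLast! := by
          rw [hequ]; exact last_map _ (by simp)
        have hh1 : 1 ≤ l.headI := by
          rw [hhead]
          exact le_trans hb1 (Lam_ge_self k X b)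
        have hlow : (X (List.replicate k 0)).getLast! ≤ l.getLast! := by
          rcases Nat.eq_zero_or_pos k with rfl | hk
          · rw [List.replicate_zero, X_nil_eq hX, last_nil]
            omega
          · rw [hlast]
            exact Lam_ge k X (replicate_ne_nil hk) (nondec_replicate k 0) (by simp)
              (by rw [last_replicate hk]; omega)
        refine ⟨hh1, ?_, hlow⟩
        rcases hprecc with h4 | h4
        · rcases h4 with ⟨h0, _⟩ | ⟨_, _, hlt | ⟨heq, hlex⟩⟩
          · rw [h0] at hlen; simp at hlen
          · rwa [last_zero_cons] at hlt
          · exfalso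
            rw [hequ, List.map_cons] at hlex
            exact lex_pos_zero (by have := Lam_ge_self k X b; omega) hlex
        · exfalso
          rw [hequ, List.map_cons] at h4
          have := (List.cons_eq_cons.1 h4).1
          have := Lam_ge_self k X b
          omega
  -- the image of E' is E'list
  have himg : E'.image Subtype.val = E'list := by
    ext l
    constructor
    · intro h
      obtain ⟨w, hw, rfl⟩ := Finset.mem_image.1 h
      exact (hmemE'v w).1 hw
    · intro h
      obtain ⟨h1, h2, -⟩ := (hmemE' _).1 h
      exact Finset.mem_image.2 ⟨⟨l, h2, h1⟩, (hmemE'v _).2 h, rfl⟩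
  refine ⟨E', ?_, ?_, ?_, ?_⟩
  · -- memARV
    refine ⟨Xp k X, isEkTree_Xp hX, ?_, ?_⟩
    · rw [himg]
      intro e he
      obtain ⟨-, -, he3, -⟩ := (hmemE' _).1 he
      exact he3
    · rw [himg]
      intro s hs hslen e he hprec
      obtain ⟨-, -, -, he4⟩ := (hmemE' _).1 he
      have hXp := (isEkTree_Xp hX).1 s hs (le_of_eq hslen)
      refine (hmemE' _).2 ⟨by rw [hXp.2, hslen], hXp.1, ⟨s, hs, hslen, rfl⟩, Or.inl ?_⟩
      rcases he4 with he4 | he4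
      · exact prec_trans hprec he4
      · rwa [he4] at hprec
  · -- phi membership characterization
    intro v
    constructor
    · intro h
      have := hdown _ ((hmemE'v _).1 h)
      rcases this with ⟨v', hv', hdisj, heq⟩ | ⟨hh, -⟩
      · rw [phi_val] at heq
        have : v = v' := Subtype.ext (List.cons_eq_cons.1 heq).2
        rw [this]; exact ⟨hv', hdisj⟩
      · rw [phi_val] at hh; simp at hh
    · rintro ⟨h1, h2⟩
      exact (hmemE'v _).2 (hup v h1 h2)
  · -- member classification
    intro w hw
    rcases hdown _ ((hmemE'v _).1 hw) with ⟨v, hv, -, heq⟩ | ⟨h1, h2, -⟩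
    · exact Or.inl ⟨v, hv, Subtype.ext (by rw [phi_val, ← heq])⟩
    · exact Or.inr ⟨h1, h2⟩
  · -- lower bound element
    obtain ⟨th, hth1, hth2, hth3⟩ := hcov a.1 (mem_image_val.2 haE)
    have hrep : prec (List.replicate k 0) th ∨ List.replicate k 0 = th := by
      have := prec_rep0 hth1
      rwa [hth2] at this
    have ht₀nd : NonDec (List.replicate k 0) := nondec_replicate k 0
    have ht₀len : (List.replicate k 0).length = k := by simp
    have hdisj : prec (X (List.replicate k 0)) a.1 ∨ X (List.replicate k 0) = a.1 := by
      rcases hrep with h | h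
      · exact Or.inl (by rw [hth3]; exact (hX.2 _ _ ht₀nd hth1 (le_of_eq ht₀len)
          (le_of_eq hth2)).1 h)
      · exact Or.inr (by rw [h, ← hth3])
    have he₀mem : X (List.replicate k 0) ∈ E.image Subtype.val := by
      rcases hdisj with h | h
      · exact hclos _ ht₀nd ht₀len a.1 (mem_image_val.2 haE) h
      · rw [h]; exact mem_image_val.2 haE
    obtain ⟨e₀, he₀E, he₀eq⟩ := Finset.mem_image.1 he₀mem
    refine ⟨e₀, he₀E, ?_⟩
    intro w hw
    rcases hdown _ ((hmemE'v _).1 hw) with ⟨v, hv, -, heq⟩ | ⟨-, -, h3⟩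
    · rw [heq, last_zero_cons]
      obtain ⟨tv, htv1, htv2, htv3⟩ := hcov v.1 (mem_image_val.2 hv)
      have hrepv : prec (List.replicate k 0) tv ∨ List.replicate k 0 = tv := by
        have := prec_rep0 htv1
        rwa [htv2] at this
      rw [he₀eq, htv3]
      rcases hrepv with h | h
      · exact prec_last_le ((hX.2 _ _ ht₀nd htv1 (le_of_eq ht₀len) (le_of_eq htv2)).1 h)
      · rw [h]
    · rw [he₀eq]
      exact h3


lemma vec_ne_nil {k : ℕ} (w : Vec (k+1)) : w.1 ≠ [] :=
  List.ne_nil_of_length_pos (by rw [w.2.2]; omega)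

lemma memARV_empty (k : ℕ) : memARV k (∅ : Finset (Vec k)) := by
  refine ⟨id, ⟨fun s h1 _ => ⟨h1, rfl⟩, fun s t _ _ _ _ => ⟨id, id⟩⟩, ?_, ?_⟩ <;> simp

lemma restrict_mapDomain_eq {k : ℕ} {E' : Finset (Vec (k+1))} {F : Finset (Vec k)}
    (x : Vec k →₀ ℝ) (h : ∀ v ∈ x.support, (phi v ∈ E' ↔ v ∈ F)) :
    restrict E' (Finsupp.mapDomain phi x) = Finsupp.mapDomain phi (restrict F x) := by
  ext w
  rw [restrict, Finsupp.filter_apply]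
  by_cases hw : ∃ v : Vec k, phi v = w
  · obtain ⟨v, rfl⟩ := hw
    rw [Finsupp.mapDomain_apply phi_inj, Finsupp.mapDomain_apply phi_inj, restrict,
      Finsupp.filter_apply]
    by_cases hv : v ∈ x.support
    · simp only [h v hv]
    · have hx0 : x v = 0 := Finsupp.notMem_support_iff.1 hv
      rw [hx0]
      simp
  · have hr : w ∉ Set.range (phi (k := k)) := by
      intro ⟨v, hv⟩; exact hw ⟨v, hv⟩
    rw [Finsupp.mapDomain_notin_range _ _ hr, Finsupp.mapDomain_notin_range _ _ hr]
    simp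

lemma restrict_pull {k : ℕ} (E' : Finset (Vec (k+1))) (x : Vec k →₀ ℝ) :
    restrict E' (Finsupp.mapDomain phi x) = Finsupp.mapDomain phi (restrict (pullF E') x) :=
  restrict_mapDomain_eq x (fun v _ => mem_pullF.symm)

lemma normSeq_zero_phi {k d : ℕ} {θ : ℝ} (x : Vec k →₀ ℝ) :
    normSeq (k+1) d θ 0 (Finsupp.mapDomain phi x) = normSeq k d θ 0 x := by
  rw [normSeq, normSeq]
  set M := ∑ v ∈ x.support, |x v| with hM
  have hMnn : 0 ≤ M := Finset.sum_nonneg (fun v _ => abs_nonneg _)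
  have hbound : ∀ v : Vec k, |x v| ≤ M := by
    intro v
    by_cases hv : v ∈ x.support
    · exact Finset.single_le_sum (fun w _ => abs_nonneg (x w)) hv
    · rw [Finsupp.notMem_support_iff.1 hv]
      simpa using hMnn
  have hbdd : BddAbove (Set.range fun v : Vec k => |x v|) := by
    refine ⟨M, ?_⟩
    rintro r ⟨v, rfl⟩
    exact hbound v
  have hbound' : ∀ w : Vec (k+1), |(Finsupp.mapDomain phi x) w| ≤ M := by
    intro w
    by_cases hw : ∃ v : Vec k, phi v = w
    · obtain ⟨v, rfl⟩ := hw
      rw [Finsupp.mapDomain_apply phi_inj]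
      exact hbound v
    · rw [Finsupp.mapDomain_notin_range _ _ (fun ⟨v, hv⟩ => hw ⟨v, hv⟩)]
      simpa using hMnn
  have hbdd' : BddAbove (Set.range fun w : Vec (k+1) => |(Finsupp.mapDomain phi x) w|) := by
    refine ⟨M, ?_⟩
    rintro r ⟨w, rfl⟩
    exact hbound' w
  apply _root_.le_antisymm
  · apply ciSup_le
    intro w
    by_cases hw : ∃ v : Vec k, phi v = w
    · obtain ⟨v, rfl⟩ := hw
      rw [Finsupp.mapDomain_apply phi_inj]
      exact le_ciSup hbdd v
    · rw [Finsupp.mapDomain_notin_range _ _ (fun ⟨v, hv⟩ => hw ⟨v, hv⟩)]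
      have hv0 := Classical.arbitrary (Vec k)
      exact le_trans (by simp) (le_trans (abs_nonneg (x hv0)) (le_ciSup hbdd hv0))
  · apply ciSup_le
    intro v
    rw [← Finsupp.mapDomain_apply (f := phi) phi_inj x v]
    exact le_ciSup hbdd' (phi v)

lemma normSeq_phi {k d : ℕ} {θ : ℝ} : ∀ (j : ℕ) (x : Vec k →₀ ℝ),
    normSeq (k+1) d θ j (Finsupp.mapDomain phi x) = normSeq k d θ j x := by
  intro j
  induction j with
  | zero => exact fun x => normSeq_zero_phi x
  | succ j ih =>
    intro x
    show max _ _ = max _ _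
    congr 1
    · exact ih x
    · congr 1
      ext r
      simp only [Set.mem_setOf_eq]
      constructor
      · rintro ⟨m, hm, E', hadm, rfl⟩
        refine ⟨m, hm, fun i => pullF (E' i), ⟨hadm.1, fun i => memARV_pull (hadm.2.1 i),
          ?_⟩, ?_⟩
        · intro i j' hij u hu v hv
          exact (prec_phi_iff u v).1
            (hadm.2.2 i j' hij (phi u) (mem_pullF.1 hu) (phi v) (mem_pullF.1 hv))
        · congr 1
          apply Finset.sum_congr rfl
          intro i _
          rw [restrict_pull, ih]
      · rintro ⟨m, hm, E, hadm, rfl⟩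
        have H : ∀ i : Fin m, ∃ E' : Finset (Vec (k+1)), memARV (k+1) E' ∧
            (∀ v ∈ x.support, (phi v ∈ E' ↔ v ∈ E i)) ∧
            (∀ w ∈ E', (∃ v ∈ E i, w = phi v) ∨
              (1 ≤ w.1.headI ∧ ∃ u ∈ E i, w.1.getLast! < u.1.getLast!)) ∧
            (∀ w ∈ E', ∃ e₀ ∈ E i, e₀.1.getLast! ≤ w.1.getLast!) := by
          intro i
          rcases (E i ∩ x.support).eq_empty_or_nonempty with hemp | hne
          · refine ⟨∅, memARV_empty _, ?_, by simp, by simp⟩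
            intro v hv
            simp only [Finset.notMem_empty, false_iff]
            intro hvE
            have : v ∈ E i ∩ x.support := Finset.mem_inter.2 ⟨hvE, hv⟩
            rw [hemp] at this
            simp at this
          · obtain ⟨a, haI, hamax⟩ := exists_max _ hne
            have haE : a ∈ E i := (Finset.mem_inter.1 haI).1
            obtain ⟨E', hmem, hchar, hclass, hlow⟩ := push_exists (hadm.2.1 i) haE
            refine ⟨E', hmem, ?_, ?_, ?_⟩
            · intro v hv
              rw [hchar v]
              constructor
              · exact fun h => h.1
              · intro hvE
                refine ⟨hvE, ?_⟩
                rcases hamax v (Finset.mem_inter.2 ⟨hvE, hv⟩) with h | h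
                · exact Or.inr h
                · exact Or.inl h
            · intro w hw
              rcases hclass w hw with h | ⟨h1, h2⟩
              · exact Or.inl h
              · exact Or.inr ⟨h1, a, haE, h2⟩
            · intro w hw
              obtain ⟨e₀, he₀, hb⟩ := hlow
              exact ⟨e₀, he₀, hb w hw⟩
        choose E' hmem hchar hclass hlow using H
        refine ⟨m, hm, E', ⟨hadm.1, hmem, ?_⟩, ?_⟩
        · -- successiveness
          intro i j' hij w hw w' hw'
          rcases hclass i w hw with ⟨v, hvE, rfl⟩ | ⟨hh, u, huE, hlt⟩
          · rcases hclass j' w' hw' with ⟨v', hv'E, rfl⟩ | ⟨hh', u', hu'E, hlt'⟩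
            · exact (prec_phi_iff v v').2 (hadm.2.2 i j' hij v hvE v' hv'E)
            · obtain ⟨e₀, he₀E, he₀le⟩ := hlow j' w' hw'
              have h1 : v.1.getLast! ≤ e₀.1.getLast! :=
                prec_last_le (hadm.2.2 i j' hij v hvE e₀ he₀E)
              have h2 : (phi v).1.getLast! = v.1.getLast! := by
                rw [phi_val]; exact last_zero_cons _
              rcases lt_or_eq_of_le (le_trans h1 he₀le) with h3 | h3
              · exact Or.inr ⟨vec_ne_nil _, vec_ne_nil _, Or.inl (by omega)⟩
              · refine Or.inr ⟨vec_ne_nil _, vec_ne_nil _, Or.inr ⟨by omega, ?_⟩⟩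
                rw [phi_val]
                cases hw'1 : w'.1 with
                | nil => exact absurd hw'1 (vec_ne_nil _)
                | cons h r =>
                  refine List.Lex.rel ?_
                  rw [hw'1] at hh'
                  simp at hh'
                  omega
          · have hwne : w.1 ≠ [] := vec_ne_nil _
            rcases hclass j' w' hw' with ⟨v', hv'E, rfl⟩ | ⟨hh', u', hu'E, hlt'⟩
            · have h1 : u.1.getLast! ≤ v'.1.getLast! :=
                prec_last_le (hadm.2.2 i j' hij u huE v' hv'E)
              have h2 : (phi v').1.getLast! = v'.1.getLast! := by
                rw [phi_val]; exact last_zero_cons _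
              exact Or.inr ⟨hwne, vec_ne_nil _, Or.inl (by omega)⟩
            · obtain ⟨e₀, he₀E, he₀le⟩ := hlow j' w' hw'
              have h1 : u.1.getLast! ≤ e₀.1.getLast! :=
                prec_last_le (hadm.2.2 i j' hij u huE e₀ he₀E)
              exact Or.inr ⟨hwne, vec_ne_nil _, Or.inl (by omega)⟩
        · congr 1
          apply Finset.sum_congr rfl
          intro i _
          rw [restrict_mapDomain_eq x (hchar i), ih]

end Work

/-- `Φ` extends to an isometric isomorphism of `T_k(d,θ)` onto its
image in `T_{k+1}(d,θ)`: for every finitely supported `x`,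
`‖Φ(x)‖_{T_{k+1}(d,θ)} = ‖x‖_{T_k(d,θ)}`. -/
theorem phi_isometry (k d : ℕ) (hd : 2 ≤ d) (θ : ℝ) (hθ0 : 0 < θ) (hθ1 : θ < 1)
    (x : Vec k →₀ ℝ) :
    tnorm (k + 1) d θ (Finsupp.mapDomain phi x) = tnorm k d θ x := by
  rw [tnorm, tnorm]
  exact iSup_congr (fun j => Work.normSeq_phi j x)
end

section
/- Given any strictly increasing sequence (q_i)_{i≥1} of naturals, there exists X = {w_1, w_2, …} ∈ E_k (the range on ω^{[k]} of an E_k-tree, listed in ≺-increasing order) such that for every i ≥ 1, max(w_i) = q_i and every entry of w_i belongs to {q_1, q_2, …}. -/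
namespace EkAux

lemma lex_irrefl (l : List ℕ) : ¬ List.Lex (· < ·) l l := by
  induction l with
  | nil => intro h; cases h
  | cons a t ih =>
    intro h
    cases h with
    | cons h => exact ih h
    | rel h => exact lt_irrefl _ h

lemma lex_asymm : ∀ {s t : List ℕ}, List.Lex (· < ·) s t → ¬ List.Lex (· < ·) t s := by
  intro s t h
  induction h with
  | nil => intro h2; cases h2
  | cons _ ih =>
    intro h2
    cases h2 with
    | cons h3 => exact ih h3
    | rel h3 => exact lt_irrefl _ h3
  | rel h1 =>
    intro h2
    cases h2 with
    | cons h3 => exact lt_irrefl _ h1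
    | rel h3 => exact absurd h1 (not_lt_of_gt h3)

lemma lex_of_prefix : ∀ {s t : List ℕ}, s <+: t → s ≠ t → List.Lex (· < ·) s t := by
  intro s
  induction s with
  | nil =>
    intro t _ hne
    cases t with
    | nil => exact absurd rfl hne
    | cons b t' => exact List.Lex.nil
  | cons a s' ih =>
    intro t hp hne
    cases t with
    | nil => exact absurd hp.length_le (by simp)
    | cons b t' =>
      obtain ⟨rfl, hp'⟩ := List.cons_prefix_cons.mp hp
      exact List.Lex.cons (ih hp' (fun h => hne (by rw [h])))

lemma lex_append (a b : List ℕ) : ∀ {s t : List ℕ}, List.Lex (· < ·) s t → ¬ s <+: t →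
    List.Lex (· < ·) (s ++ a) (t ++ b) := by
  intro s t h
  induction h with
  | nil => intro hnp; exact absurd List.nil_prefix hnp
  | cons h ih =>
    intro hnp
    exact List.Lex.cons (ih (fun hp => hnp (List.cons_prefix_cons.mpr ⟨rfl, hp⟩)))
  | rel h => intro _; exact List.Lex.rel h

lemma prec_irrefl (s : List ℕ) : ¬ prec s s := by
  rintro (⟨h1, h2⟩ | ⟨h1, h2, h3 | ⟨h3, h4⟩⟩)
  · exact h2 h1
  · exact lt_irrefl _ h3
  · exact lex_irrefl s h4

lemma prec_asymm {s t : List ℕ} (h : prec s t) : ¬ prec t s := by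
  intro g
  rcases h with ⟨h1, h2⟩ | ⟨h1, h2, h3⟩
  · rcases g with ⟨g1, g2⟩ | ⟨g1, g2, _⟩
    · exact h2 g1
    · exact g2 h1
  · rcases g with ⟨g1, _⟩ | ⟨_, _, g3⟩
    · exact h2 g1
    · rcases h3 with h3 | ⟨h3, h4⟩ <;> rcases g3 with g3 | ⟨g3, g4⟩
      · omega
      · omega
      · omega
      · exact lex_asymm h4 g4

lemma getLast!_eq_getElem {l : List ℕ} (h : l ≠ []) :
    l.getLast! = l[l.length - 1]'(Nat.sub_lt (List.length_pos_iff.mpr h) one_pos) := by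
  apply List.getLast!_of_getLast?
  rw [List.getLast?_eq_getElem?]
  exact List.getElem?_eq_getElem _

lemma nonDec_getElem_le {l : List ℕ} (h : NonDec l) {i j : ℕ} (hij : i ≤ j)
    (hj : j < l.length) : l[i]'(lt_of_le_of_lt hij hj) ≤ l[j] := by
  rcases eq_or_lt_of_le hij with rfl | hij'
  · exact le_refl _
  · exact List.pairwise_iff_getElem.mp (List.isChain_iff_pairwise.mp h) i j _ hj hij'

lemma le_getLast!_of_mem {l : List ℕ} (h : NonDec l) {x : ℕ} (hx : x ∈ l) :
    x ≤ l.getLast! := by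
  have hne : l ≠ [] := by rintro rfl; simp at hx
  obtain ⟨n, hn, rfl⟩ := List.getElem_of_mem hx
  rw [getLast!_eq_getElem hne]
  exact nonDec_getElem_le h (Nat.le_sub_one_of_lt hn) (Nat.sub_lt (List.length_pos_iff.mpr hne) one_pos)

lemma getLast!_take {l : List ℕ} {p : ℕ} (hp : p < l.length) :
    (l.take (p + 1)).getLast! = l[p] := by
  have hlen : (l.take (p + 1)).length = p + 1 := by rw [List.length_take]; omega
  apply List.getLast!_of_getLast?
  rw [List.getLast?_eq_getElem?, hlen, Nat.add_sub_cancel, List.getElem?_take,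
    if_pos (Nat.lt_succ_self p), List.getElem?_eq_getElem hp]

/-- `ext`: pad with copies of the last entry up to length `k`. -/
def extk (k : ℕ) (s : List ℕ) : List ℕ := s ++ List.replicate (k - s.length) s.getLast!

lemma extk_length {k : ℕ} {s : List ℕ} (h : s.length ≤ k) : (extk k s).length = k := by
  simp [extk]; omega

lemma extk_nonDec {k : ℕ} {s : List ℕ} (h : NonDec s) : NonDec (extk k s) := by
  simp only [NonDec, List.Chain', List.isChain_iff_pairwise] at h ⊢
  rw [extk, List.pairwise_append]
  refine ⟨h, ?_, ?_⟩
  · rw [List.pairwise_replicate]; right; exact le_refl _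
  · intro x hx y hy
    rw [List.eq_of_mem_replicate hy]
    exact le_getLast!_of_mem (List.isChain_iff_pairwise.mpr h) hx

lemma extk_ne_nil {k : ℕ} (hk : 0 < k) {s : List ℕ} (h : s.length ≤ k) : extk k s ≠ [] := by
  intro hc
  have := extk_length h
  rw [hc] at this
  simp at this; omega

lemma extk_getLast! {k : ℕ} {s : List ℕ} (h : s ≠ []) : (extk k s).getLast! = s.getLast! := by
  rw [extk]
  rcases Nat.eq_zero_or_pos (k - s.length) with h0 | h0
  · rw [h0]; simp
  · apply List.getLast!_of_getLast?
    obtain ⟨m, hm⟩ : ∃ m, k - s.length = m + 1 := ⟨k - s.length - 1, by omega⟩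
    rw [hm, List.getLast?_append]
    have hrep : (List.replicate (m + 1) s.getLast!).getLast? = some s.getLast! := by
      rw [List.getLast?_eq_getElem?]
      simp
    rw [hrep]
    rfl

lemma extk_eq_self {k : ℕ} {s : List ℕ} (h : s.length = k) : extk k s = s := by
  rw [extk, h]; simp

lemma extk_prefix_eq {k : ℕ} {s t : List ℕ} (htl : t.length ≤ k) (ht : NonDec t)
    (hs : s ≠ []) (hpre : s <+: t) (hlast : s.getLast! = t.getLast!) :
    extk k s = extk k t := by
  have hst : s.length ≤ t.length := hpre.length_le
  have hsp : 0 < s.length := List.length_pos_iff.mpr hs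
  have htn : t ≠ [] := fun h => hs (List.prefix_nil.mp (h ▸ hpre))
  have key : t = s ++ List.replicate (t.length - s.length) s.getLast! := by
    apply List.ext_getElem
    · simp
      omega
    · intro n h1 h2
      by_cases hn : n < s.length
      · rw [List.getElem_append_left hn]
        exact (hpre.getElem hn).symm
      · push_neg at hn
        rw [List.getElem_append_right hn, List.getElem_replicate]
        have e1 : s.getLast! = t[s.length - 1]'(by omega) := by
          rw [getLast!_eq_getElem hs, hpre.getElem]
        have e2 : t.getLast! = t[t.length - 1]'(by omega) := getLast!_eq_getElem htn
        have le1 : t[s.length - 1]'(by omega) ≤ t[n] := nonDec_getElem_le ht (by omega) h1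
        have le2 : t[n] ≤ t[t.length - 1]'(by omega) :=
          nonDec_getElem_le ht (by omega) (by omega)
        omega
  have hfin : extk k t = s ++ (List.replicate (t.length - s.length) s.getLast! ++
      List.replicate (k - t.length) s.getLast!) := by
    rw [extk, ← hlast]
    nth_rewrite 1 [key]
    rw [List.append_assoc]
  rw [hfin, extk, ← List.replicate_add]
  have hd : t.length - s.length + (k - t.length) = k - s.length := by omega
  rw [hd]

lemma prec_extk {k : ℕ} (hk : 2 ≤ k) {s t : List ℕ} (ht : NonDec t)
    (hsn : s ≠ []) (htn : t ≠ []) (hsl : s.length ≤ k) (htl : t.length ≤ k)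
    (h : prec s t) : prec (extk k s) (extk k t) ∨ (s <+: t ∧ s ≠ t ∧ extk k s = extk k t) := by
  have hk0 : 0 < k := by omega
  rcases h with ⟨h1, _⟩ | ⟨_, _, h3 | ⟨h3, h4⟩⟩
  · exact absurd h1 hsn
  · left
    exact Or.inr ⟨extk_ne_nil hk0 hsl, extk_ne_nil hk0 htl,
      Or.inl (by rw [extk_getLast! hsn, extk_getLast! htn]; exact h3)⟩
  · by_cases hpre : s <+: t
    · right
      refine ⟨hpre, ?_, extk_prefix_eq htl ht hsn hpre h3⟩
      rintro rfl; exact lex_irrefl s h4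
    · left
      exact Or.inr ⟨extk_ne_nil hk0 hsl, extk_ne_nil hk0 htl,
        Or.inr ⟨by rw [extk_getLast! hsn, extk_getLast! htn]; exact h3,
          lex_append _ _ h4 hpre⟩⟩

end EkAux

/-- given a strictly increasing sequence `(q_i)` of naturals, there is
an `E_k`-tree `X̂` such that, enumerating `ω^{[k]}` in `≺`-increasing order as
`(u_i)`, the element `w_i = X̂(u_i)` has maximum `q_i` and all its entries among
the `q_j`'s. -/
theorem exists_EkTree_prescribed_maxima (k : ℕ) (hk : 2 ≤ k)
    (q : ℕ → ℕ) (hq : StrictMono q)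
    (u : ℕ → List ℕ)
    (hu1 : ∀ i, NonDec (u i) ∧ (u i).length = k)
    (hu2 : ∀ i j, i < j → prec (u i) (u j))
    (hu3 : ∀ s, NonDec s → s.length = k → ∃ i, u i = s) :
    ∃ X : List ℕ → List ℕ, IsEkTree k X ∧
      ∀ i, (X (u i)).getLast! = q i ∧ ∀ a ∈ X (u i), ∃ j, a = q j := by
  classical
  open EkAux in
  -- uniqueness and order reflection for `u`
  have uniq : ∀ {i j}, u i = u j → i = j := by
    intro i j h
    rcases lt_trichotomy i j with h' | h' | h'
    · exact absurd (h ▸ hu2 i j h') (prec_irrefl _)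
    · exact h'
    · exact absurd (h ▸ hu2 j i h') (prec_irrefl _)
  have uord : ∀ {i j}, prec (u i) (u j) → i < j := by
    intro i j h
    rcases lt_trichotomy i j with h' | h' | h'
    · exact h'
    · subst h'; exact absurd h (prec_irrefl _)
    · exact absurd h (prec_asymm (hu2 j i h'))
  -- the index function
  have hex : ∀ s : List ℕ, ∃ i, NonDec s → s.length ≤ k → u i = extk k s := by
    intro s
    by_cases h : NonDec s ∧ s.length ≤ k
    · obtain ⟨i, hi⟩ := hu3 (extk k s) (extk_nonDec h.1) (extk_length h.2)
      exact ⟨i, fun _ _ => hi⟩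
    · exact ⟨0, fun h1 h2 => absurd ⟨h1, h2⟩ h⟩
  choose idx hidx using hex
  have idxlt : ∀ {s t : List ℕ}, NonDec s → s.length ≤ k → NonDec t → t.length ≤ k →
      prec (extk k s) (extk k t) → idx s < idx t := by
    intro s t hs hsl ht htl h
    exact uord (by rw [hidx s hs hsl, hidx t ht htl]; exact h)
  have idxeq : ∀ {s t : List ℕ}, NonDec s → s.length ≤ k → NonDec t → t.length ≤ k →
      extk k s = extk k t → idx s = idx t := by
    intro s t hs hsl ht htl h
    exact uniq (by rw [hidx s hs hsl, hidx t ht htl, h])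
  -- the tree
  set X : List ℕ → List ℕ :=
    fun s => (List.range s.length).map (fun j => q (idx (s.take (j + 1)))) with hX
  have Xlen : ∀ s, (X s).length = s.length := by intro s; simp [hX]
  have Xne : ∀ {s : List ℕ}, s ≠ [] → X s ≠ [] := by
    intro s hs
    rw [← List.length_pos_iff, Xlen, List.length_pos_iff]
    exact hs
  have Xlast : ∀ {s : List ℕ}, s ≠ [] → (X s).getLast! = q (idx s) := by
    intro s hs
    have hl : 0 < s.length := List.length_pos_iff.mpr hs
    apply List.getLast!_of_getLast?
    rw [List.getLast?_eq_getElem?, Xlen, hX]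
    simp only []
    rw [List.getElem?_map, List.getElem?_range (Nat.sub_lt hl one_pos)]
    simp only [Option.map_some]
    congr 2
    have h1 : s.length - 1 + 1 = s.length := by omega
    rw [h1, List.take_length]
  -- prefix preservation
  have Xpre : ∀ {s t : List ℕ}, s <+: t → X s <+: X t := by
    intro s t h
    have hst : s.length ≤ t.length := h.length_le
    have h1 : List.range s.length <+: List.range t.length := by
      have := List.take_prefix s.length (List.range t.length)
      rwa [List.take_range, min_eq_left hst] at this
    have h2 : X s = (List.range s.length).map (fun j => q (idx (t.take (j + 1)))) := by
      rw [hX]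
      apply List.map_congr_left
      intro j hj
      rw [List.mem_range] at hj
      obtain ⟨r, rfl⟩ := h
      rw [List.take_append_of_le_length (by omega)]
    rw [h2, hX]
    exact List.IsPrefix.map _ h1
  -- nondecreasingness of images
  have Xnd : ∀ s, NonDec s → s.length ≤ k → NonDec (X s) := by
    intro s hs hsl
    rw [hX]
    apply (List.isChain_map _).mpr
    rcases Nat.eq_zero_or_pos s.length with h0 | h0
    · rw [h0]; exact List.isChain_nil
    · obtain ⟨n, hn⟩ : ∃ n, s.length = n + 1 := ⟨s.length - 1, by omega⟩
      rw [hn, List.isChain_range_succ]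
      intro m hm
      apply hq.monotone
      set a := s.take (m + 1) with ha
      set b := s.take (m + 1 + 1) with hb
      have hma : m < s.length := by omega
      have hmb : m + 1 < s.length := by omega
      have hal : a.length = m + 1 := by rw [ha, List.length_take]; omega
      have hbl : b.length = m + 2 := by rw [hb, List.length_take]; omega
      have hane : a ≠ [] := by intro h; rw [h] at hal; simp at hal
      have hand : NonDec a := hs.prefix (List.take_prefix _ _)
      have hbnd : NonDec b := hs.prefix (List.take_prefix _ _)
      have hab : a <+: b := by
        rw [ha, hb]
        have he : List.take (m + 1) s = List.take (m + 1) (List.take (m + 1 + 1) s) := by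
          rw [List.take_take]
          congr 1
          omega
        rw [he]
        exact List.take_prefix _ _
      have hga : a.getLast! = s[m] := getLast!_take hma
      have hgb : b.getLast! = s[m + 1] := getLast!_take hmb
      rcases lt_or_eq_of_le (nonDec_getElem_le hs (Nat.le_succ m) hmb) with hlt | heq
      · apply le_of_lt
        apply idxlt hand (by omega) hbnd (by omega)
        refine Or.inr ⟨extk_ne_nil (by omega) (by omega), extk_ne_nil (by omega) (by omega),
          Or.inl ?_⟩
        rw [extk_getLast! hane, extk_getLast! (by intro h; rw [h] at hbl; simp at hbl),
          hga, hgb]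
        exact hlt
      · apply le_of_eq
        apply idxeq hand (by omega) hbnd (by omega)
        exact extk_prefix_eq (by omega) hbnd hane hab (by rw [hga, hgb, heq])
  -- prec preservation
  have Xprec : ∀ {s t : List ℕ}, NonDec s → NonDec t → s.length ≤ k → t.length ≤ k →
      prec s t → prec (X s) (X t) := by
    intro s t hs ht hsl htl h
    rcases h with ⟨h1, h2⟩ | ⟨h1, h2, _⟩
    · subst h1
      left
      refine ⟨by rw [hX]; simp, Xne h2⟩
    · rcases prec_extk hk ht h1 h2 hsl htl (by right; exact ⟨h1, h2, ‹_›⟩) with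
        hcase | ⟨hpre, hne, hext⟩
      · right
        refine ⟨Xne h1, Xne h2, Or.inl ?_⟩
        rw [Xlast h1, Xlast h2]
        exact hq (idxlt hs hsl ht htl hcase)
      · right
        refine ⟨Xne h1, Xne h2, Or.inr ⟨?_, ?_⟩⟩
        · rw [Xlast h1, Xlast h2, idxeq hs hsl ht htl hext]
        · apply lex_of_prefix (Xpre hpre)
          intro hXeq
          apply hne
          apply hpre.eq_of_length
          have := congrArg List.length hXeq
          rwa [Xlen, Xlen] at this
  refine ⟨X, ⟨fun s hsnd hsl => ⟨Xnd s hsnd hsl, Xlen s⟩,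
    fun s t hs ht hsl htl => ⟨Xprec hs ht hsl htl, Xpre⟩⟩, ?_⟩
  intro i
  have hui := hu1 i
  have huin : u i ≠ [] := by
    intro h
    have := hui.2
    rw [h] at this
    simp at this
    omega
  constructor
  · rw [Xlast huin]
    congr 1
    apply uniq
    rw [hidx (u i) hui.1 (le_of_eq hui.2), extk_eq_self hui.2]
  · intro a ha
    rw [hX] at ha
    simp only [List.mem_map] at ha
    obtain ⟨j, _, hj⟩ := ha
    exact ⟨_, hj.symm⟩
end
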